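/- Let {u(n,m)} be an i.i.d. real zero-mean random field with finite variance σ². Then E[ sup_{ω,υ} | (1/(NM)) ∑_{n=0}^{N-1} ∑_{m=0}^{M-1} u(n,m) e^{j(ωn + υm)} |² ] ≤ K (NM)^{-1/2} for some finite constant K independent of N, M. -/

import Mathlib

open MeasureTheory ProbabilityTheory Filter

namespace Stmt9Aux
noncomputable section

def G (N M : ℕ) : Finset (ℤ × ℤ) := Finset.Ico (0:ℤ) (N:ℤ) ×ˢ Finset.Ico (0:ℤ) (M:ℤ)
def T (N M : ℕ) : Finset (ℤ × ℤ) :=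
  Finset.Ico (1-(N:ℤ)) (N:ℤ) ×ˢ Finset.Ico (1-(M:ℤ)) (M:ℤ)
def Gf (N M : ℕ) (τ : ℤ × ℤ) : Finset (ℤ × ℤ) := (G N M).filter (fun q => q + τ ∈ G N M)
def C (N M : ℕ) (v : ℤ × ℤ → ℝ) (τ : ℤ × ℤ) : ℝ := ∑ q ∈ Gf N M τ, v (q + τ) * v q
def d (w : ℝ × ℝ) (p : ℤ × ℤ) : ℝ := w.1 * (p.1 : ℝ) + w.2 * (p.2 : ℝ)
def e (r : ℝ) : ℂ := Complex.exp ((r : ℂ) * Complex.I)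

lemma norm_e (r : ℝ) : ‖e r‖ = 1 := by
  simp [e, Complex.norm_exp]

lemma e_mul_conj (r s : ℝ) : e r * (starRingEnd ℂ) (e s) = e (r - s) := by
  rw [e, e, e, ← Complex.exp_conj, ← Complex.exp_add]
  congr 1
  simp [map_mul, Complex.conj_I, Complex.conj_ofReal]
  ring

lemma sum_sub_reindex {β : Type*} [AddCommMonoid β] (N M : ℕ) (F : ℤ × ℤ → ℤ × ℤ → β) :
    ∑ p ∈ G N M, ∑ q ∈ G N M, F (p - q) q = ∑ τ ∈ T N M, ∑ q ∈ Gf N M τ, F τ q := by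
  classical
  have hR : ∀ τ, ∑ q ∈ Gf N M τ, F τ q
      = ∑ q ∈ G N M, if q + τ ∈ G N M then F τ q else 0 := by
    intro τ; rw [Gf, Finset.sum_filter]
  simp_rw [hR]
  rw [← Finset.sum_product', ← Finset.sum_product']
  rw [← Finset.sum_filter]
  refine Finset.sum_nbij' (fun r => (r.1 - r.2, r.2)) (fun r => (r.2 + r.1, r.2)) ?_ ?_ ?_ ?_ ?_
  · intro a ha
    simp only [G, T, Finset.mem_filter, Finset.mem_product, Finset.mem_Ico, Prod.ext_iff] at *
    constructor
    · constructor <;> [skip; exact ha.2] <;> simp [Prod.fst_sub, Prod.snd_sub] <;> omega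
    · simpa using ha.1
  · intro a ha
    simp only [G, T, Finset.mem_filter, Finset.mem_product, Finset.mem_Ico] at *
    exact ⟨ha.2, ha.1.2⟩
  · intro a ha; simp
  · intro a ha; simp
  · intro a ha; simp

lemma step1 (N M : ℕ) (v : ℤ × ℤ → ℝ) (w : ℝ × ℝ) :
    ∑ n ∈ Finset.range N, ∑ m ∈ Finset.range M,
        (v ((n : ℤ), (m : ℤ)) : ℂ) * Complex.exp (Complex.I * (w.1 * n + w.2 * m))
      = ∑ p ∈ G N M, (v p : ℂ) * e (d w p) := by
  classical
  rw [← Finset.sum_product']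
  refine Finset.sum_nbij' (fun r => ((r.1 : ℤ), (r.2 : ℤ))) (fun r => (r.1.toNat, r.2.toNat))
    ?_ ?_ ?_ ?_ ?_
  · intro a ha
    simp only [G, Finset.mem_product, Finset.mem_range, Finset.mem_Ico] at *
    omega
  · intro a ha
    simp only [G, Finset.mem_product, Finset.mem_range, Finset.mem_Ico] at *
    omega
  · intro a ha; simp
  · intro a ha
    simp only [G, Finset.mem_product, Finset.mem_Ico] at ha
    simp only [Prod.ext_iff]
    omega
  · intro a ha
    simp only [e, d]
    congr 1
    push_cast
    ring

lemma pointwise (N M : ℕ) (v : ℤ × ℤ → ℝ) (w : ℝ × ℝ) :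
    ‖∑ n ∈ Finset.range N, ∑ m ∈ Finset.range M,
        (v ((n : ℤ), (m : ℤ)) : ℂ) * Complex.exp (Complex.I * (w.1 * n + w.2 * m))‖ ^ 2
      ≤ ∑ τ ∈ T N M, |C N M v τ| := by
  classical
  rw [step1]
  set S : ℂ := ∑ p ∈ G N M, (v p : ℂ) * e (d w p) with hS
  have h2 : ‖S‖ ^ 2 = ‖S * (starRingEnd ℂ) S‖ := by
    rw [norm_mul, RCLike.norm_conj, sq]
  rw [h2]
  have h3 : S * (starRingEnd ℂ) S
      = ∑ τ ∈ T N M, (C N M v τ : ℂ) * e (d w τ) := by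
    rw [hS, map_sum, Finset.sum_mul_sum]
    have hterm : ∀ p ∈ G N M, ∀ q ∈ G N M,
        ((v p : ℂ) * e (d w p)) * ((starRingEnd ℂ) ((v q : ℂ) * e (d w q)))
          = ((v ((q + (p - q)) : ℤ × ℤ) * v q : ℝ) : ℂ) * e (d w (p - q)) := by
      intro p hp q hq
      rw [map_mul, Complex.conj_ofReal, mul_mul_mul_comm, e_mul_conj]
      have : d w p - d w q = d w (p - q) := by
        simp only [d, Prod.fst_sub, Prod.snd_sub]
        push_cast
        ring
      rw [this, add_sub_cancel]
      push_cast
      ring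
    rw [Finset.sum_congr rfl (fun p hp => Finset.sum_congr rfl (fun q hq => hterm p hp q hq))]
    rw [sum_sub_reindex N M (fun τ q => ((v (q + τ) * v q : ℝ) : ℂ) * e (d w τ))]
    refine Finset.sum_congr rfl (fun τ _ => ?_)
    rw [← Finset.sum_mul, C]
    push_cast
    ring
  rw [h3]
  refine (norm_sum_le _ _).trans ?_
  refine Finset.sum_le_sum (fun τ _ => ?_)
  rw [norm_mul, norm_e, mul_one, Complex.norm_real, Real.norm_eq_abs]

lemma card_G (N M : ℕ) : (G N M).card = N * M := by
  simp [G, Int.card_Ico]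

lemma card_T_le (N M : ℕ) : ((T N M).card : ℝ) ≤ 4 * N * M := by
  have h : (T N M).card = ((N:ℤ) - (1 - N)).toNat * ((M:ℤ) - (1 - M)).toNat := by
    simp [T, Int.card_Ico]
  rw [h]
  push_cast
  rcases Nat.eq_zero_or_pos N with hN | hN
  · subst hN; simp
  rcases Nat.eq_zero_or_pos M with hM | hM
  · subst hM; simp
  have h1 : (((N:ℤ) - (1 - N)).toNat : ℝ) = 2 * N - 1 := by
    have : ((N:ℤ) - (1 - N)).toNat = 2 * N - 1 := by omega
    rw [this]; push_cast [Nat.cast_sub (by omega : 1 ≤ 2 * N)]; ring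
  have h2 : (((M:ℤ) - (1 - M)).toNat : ℝ) = 2 * M - 1 := by
    have : ((M:ℤ) - (1 - M)).toNat = 2 * M - 1 := by omega
    rw [this]; push_cast [Nat.cast_sub (by omega : 1 ≤ 2 * M)]; ring
  rw [h1, h2]
  have hN' : (1:ℝ) ≤ N := by exact_mod_cast hN
  have hM' : (1:ℝ) ≤ M := by exact_mod_cast hM
  nlinarith

lemma Gf_zero (N M : ℕ) : Gf N M 0 = G N M := by
  rw [Gf]
  exact Finset.filter_true_of_mem (fun q hq => by simpa using hq)

variable {Ω : Type*} [MeasurableSpace Ω] {μ : Measure Ω} [IsProbabilityMeasure μ]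
  {u : ℤ × ℤ → Ω → ℝ} {σ2 : ℝ}

lemma int_abs_le_sqrt {f : Ω → ℝ} (hf : Integrable f μ)
    (hf2 : Integrable (fun x => f x ^ 2) μ) :
    ∫ x, |f x| ∂μ ≤ Real.sqrt (∫ x, f x ^ 2 ∂μ) := by
  set A := ∫ x, |f x| ∂μ with hA
  have hA0 : 0 ≤ A := integral_nonneg (fun x => abs_nonneg _)
  apply Real.le_sqrt_of_sq_le
  have h0 : 0 ≤ ∫ x, (|f x| - A) ^ 2 ∂μ := integral_nonneg (fun x => sq_nonneg _)
  have hexp : ∫ x, (|f x| - A) ^ 2 ∂μ = (∫ x, f x ^ 2 ∂μ) - A ^ 2 := by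
    have hre : (fun x => (|f x| - A) ^ 2)
        = fun x => f x ^ 2 - (2 * A) * |f x| + A ^ 2 := by
      funext x
      have : |f x| ^ 2 = f x ^ 2 := sq_abs _
      nlinarith [this]
    have hI2 : Integrable (fun x => 2 * A * |f x|) μ := hf.abs.const_mul (2 * A)
    have hI1 : Integrable (fun x => f x ^ 2 - 2 * A * |f x|) μ := hf2.sub hI2
    rw [hre, integral_add hI1 (integrable_const _), integral_sub hf2 hI2,
      MeasureTheory.integral_const_mul, integral_const]
    simp [← hA]
    ring
  nlinarith [h0, hexp]

lemma mulInt (hL2 : ∀ p, MemLp (u p) 2 μ) (a b : ℤ × ℤ) :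
    Integrable (fun x => u a x * u b x) μ := by
  have h : MemLp (u b • u a) 1 μ :=
    (hL2 a).smul (hL2 b)
  have h2 : (u b • u a) = fun x => u a x * u b x := by
    funext x; simp [mul_comm]
  rw [h2] at h
  exact memLp_one_iff_integrable.mp h

lemma int_mul_self (hvar : ∀ p, ∫ x, (u p x) ^ 2 ∂μ = σ2) (a : ℤ × ℤ) :
    ∫ x, u a x * u a x ∂μ = σ2 := by
  rw [← hvar a]; congr 1; funext x; ring

lemma indep_pair_mul (hmeas : ∀ p, Measurable (u p))
    (hindep : iIndepFun u μ)
    {a b c : ℤ × ℤ} (hac : a ≠ c) (hbc : b ≠ c) :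
    IndepFun (fun x => u a x * u b x) (fun x => u c x * u c x) μ := by
  have h := (hindep.indepFun_prodMk hmeas a b c hac hbc).comp
    (measurable_fst.mul measurable_snd) (measurable_id.mul measurable_id)
  simpa [Function.comp_def] using h

lemma offdiag_term (hmeas : ∀ p, Measurable (u p))
    (hindep : iIndepFun u μ)
    (hL2 : ∀ p, MemLp (u p) 2 μ)
    (hmean : ∀ p, ∫ x, u p x ∂μ = 0)
    {a b c : ℤ × ℤ} (hab : a ≠ b) (hac : a ≠ c) (hbc : b ≠ c) :
    Integrable (fun x => (u a x * u b x) * (u c x * u c x)) μ ∧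
      ∫ x, (u a x * u b x) * (u c x * u c x) ∂μ = 0 := by
  have hind := indep_pair_mul hmeas hindep hac hbc
  have hiab : Integrable (fun x => u a x * u b x) μ := mulInt hL2 a b
  have hicc : Integrable (fun x => u c x * u c x) μ := mulInt hL2 c c
  constructor
  · have := hind.integrable_mul hiab hicc
    exact this
  · have h := hind.integral_fun_mul_eq_mul_integral
      ((hmeas a).mul (hmeas b)).aestronglyMeasurable
      ((hmeas c).mul (hmeas c)).aestronglyMeasurable
    rw [h]
    have hab0 : ∫ x, u a x * u b x ∂μ = 0 := by
      rw [(hindep.indepFun hab).integral_fun_mul_eq_mul_integral (hmeas a).aestronglyMeasurable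
        (hmeas b).aestronglyMeasurable, hmean a, zero_mul]
    rw [hab0, zero_mul]

lemma offdiag4_term (hmeas : ∀ p, Measurable (u p))
    (hindep : iIndepFun u μ)
    (hL2 : ∀ p, MemLp (u p) 2 μ)
    (hmean : ∀ p, ∫ x, u p x ∂μ = 0)
    {a b c e : ℤ × ℤ} (hac : a ≠ c) (hae : a ≠ e) (hbc : b ≠ c) (hbe : b ≠ e) (hab : a ≠ b) :
    Integrable (fun x => (u a x * u b x) * (u c x * u e x)) μ ∧
      ∫ x, (u a x * u b x) * (u c x * u e x) ∂μ = 0 := by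
  have hind : IndepFun (fun x => u a x * u b x) (fun x => u c x * u e x) μ := by
    have := hindep.indepFun_mul_mul hmeas a b c e hac hae hbc hbe
    exact this
  have hiab : Integrable (fun x => u a x * u b x) μ := mulInt hL2 a b
  have hice : Integrable (fun x => u c x * u e x) μ := mulInt hL2 c e
  constructor
  · have := hind.integrable_mul hiab hice
    exact this
  · have h := hind.integral_fun_mul_eq_mul_integral
      ((hmeas a).mul (hmeas b)).aestronglyMeasurable
      ((hmeas c).mul (hmeas e)).aestronglyMeasurable
    rw [h]
    have hab0 : ∫ x, u a x * u b x ∂μ = 0 := by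
      rw [(hindep.indepFun hab).integral_fun_mul_eq_mul_integral (hmeas a).aestronglyMeasurable
        (hmeas b).aestronglyMeasurable, hmean a, zero_mul]
    rw [hab0, zero_mul]

lemma diag_term (hmeas : ∀ p, Measurable (u p))
    (hindep : iIndepFun u μ)
    (hL2 : ∀ p, MemLp (u p) 2 μ)
    (hvar : ∀ p, ∫ x, (u p x) ^ 2 ∂μ = σ2)
    {a b : ℤ × ℤ} (hab : a ≠ b) :
    Integrable (fun x => (u a x * u b x) * (u a x * u b x)) μ ∧
      ∫ x, (u a x * u b x) * (u a x * u b x) ∂μ = σ2 * σ2 := by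
  have hre : (fun x => (u a x * u b x) * (u a x * u b x))
      = fun x => (u a x * u a x) * (u b x * u b x) := by
    funext x; ring
  have hind : IndepFun (fun x => u a x * u a x) (fun x => u b x * u b x) μ := by
    have := (hindep.indepFun hab).comp
      (measurable_id.mul measurable_id) (measurable_id.mul measurable_id)
    simpa [Function.comp_def] using this
  constructor
  · rw [hre]
    have := hind.integrable_mul (mulInt hL2 a a) (mulInt hL2 b b)
    exact this
  · rw [hre]
    rw [hind.integral_fun_mul_eq_mul_integral ((hmeas a).mul (hmeas a)).aestronglyMeasurable
      ((hmeas b).mul (hmeas b)).aestronglyMeasurable,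
      int_mul_self hvar, int_mul_self hvar]

/-- The general term estimate for `τ ≠ 0`. -/
lemma term_est (hmeas : ∀ p, Measurable (u p))
    (hindep : iIndepFun u μ)
    (hL2 : ∀ p, MemLp (u p) 2 μ)
    (hmean : ∀ p, ∫ x, u p x ∂μ = 0)
    (hvar : ∀ p, ∫ x, (u p x) ^ 2 ∂μ = σ2)
    {τ : ℤ × ℤ} (hτ : τ ≠ 0) (q q' : ℤ × ℤ) :
    Integrable (fun x => (u (q + τ) x * u q x) * (u (q' + τ) x * u q' x)) μ ∧
      ∫ x, (u (q + τ) x * u q x) * (u (q' + τ) x * u q' x) ∂μ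
        = if q = q' then σ2 * σ2 else 0 := by
  have hτ' : τ.1 ≠ 0 ∨ τ.2 ≠ 0 := by
    by_contra h
    push_neg at h
    exact hτ (Prod.ext h.1 h.2)
  by_cases hqq : q = q'
  · subst hqq
    simp only [if_pos rfl]
    exact diag_term hmeas hindep hL2 hvar
      (by simp only [ne_eq, Prod.ext_iff, Prod.fst_add, Prod.snd_add]; omega)
  · simp only [if_neg hqq]
    have hq12 : q.1 ≠ q'.1 ∨ q.2 ≠ q'.2 := by
      by_contra h
      push_neg at h
      exact hqq (Prod.ext h.1 h.2)
    by_cases h1 : q' = q + τ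
    · -- term = (u q * u (q+2τ)) * (u (q+τ))²
      subst h1
      have hre : (fun x => (u (q + τ) x * u q x) * (u (q + τ + τ) x * u (q + τ) x))
          = fun x => (u q x * u (q + τ + τ) x) * (u (q + τ) x * u (q + τ) x) := by
        funext x; ring
      have h := offdiag_term hmeas hindep hL2 hmean
        (a := q) (b := q + τ + τ) (c := q + τ)
        (by simp only [ne_eq, Prod.ext_iff, Prod.fst_add, Prod.snd_add]; omega)
        (by simp only [ne_eq, Prod.ext_iff, Prod.fst_add, Prod.snd_add]; omega)
        (by simp only [ne_eq, Prod.ext_iff, Prod.fst_add, Prod.snd_add]; omega)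
      constructor
      · rw [hre]; exact h.1
      · rw [hre]
        have : ∫ x, (u q x * u (q + τ + τ) x) * (u (q + τ) x * u (q + τ) x) ∂μ = 0 := h.2
        exact this
    · by_cases h2 : q = q' + τ
      · subst h2
        have hre : (fun x => (u (q' + τ + τ) x * u (q' + τ) x) * (u (q' + τ) x * u q' x))
            = fun x => (u (q' + τ + τ) x * u q' x) * (u (q' + τ) x * u (q' + τ) x) := by
          funext x; ring
        have h := offdiag_term hmeas hindep hL2 hmean
          (a := q' + τ + τ) (b := q') (c := q' + τ)
          (by simp only [ne_eq, Prod.ext_iff, Prod.fst_add, Prod.snd_add]; omega)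
          (by simp only [ne_eq, Prod.ext_iff, Prod.fst_add, Prod.snd_add]; omega)
          (by simp only [ne_eq, Prod.ext_iff, Prod.fst_add, Prod.snd_add]; omega)
        constructor
        · rw [hre]; exact h.1
        · rw [hre]; exact h.2
      · -- all four indices distinct
        have h1' : q.1 + τ.1 ≠ q'.1 ∨ q.2 + τ.2 ≠ q'.2 := by
          by_contra h
          push_neg at h
          exact h1 (Prod.ext (by simp [← h.1]) (by simp [← h.2]))
        have h2' : q.1 ≠ q'.1 + τ.1 ∨ q.2 ≠ q'.2 + τ.2 := by
          by_contra h
          push_neg at h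
          exact h2 (Prod.ext (by simp [h.1]) (by simp [h.2]))
        exact offdiag4_term hmeas hindep hL2 hmean
          (a := q + τ) (b := q) (c := q' + τ) (e := q')
          (by simp only [ne_eq, Prod.ext_iff, Prod.fst_add, Prod.snd_add]; omega)
          (by simp only [ne_eq, Prod.ext_iff, Prod.fst_add, Prod.snd_add]; omega)
          (by simp only [ne_eq, Prod.ext_iff, Prod.fst_add, Prod.snd_add]; omega)
          (by simp only [ne_eq, Prod.ext_iff]; omega)
          (by simp only [ne_eq, Prod.ext_iff, Prod.fst_add, Prod.snd_add]; omega)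

lemma C_integrable (hL2 : ∀ p, MemLp (u p) 2 μ) (N M : ℕ) (τ : ℤ × ℤ) :
    Integrable (fun x => C N M (fun p => u p x) τ) μ := by
  have : (fun x => C N M (fun p => u p x) τ)
      = fun x => ∑ q ∈ Gf N M τ, u (q + τ) x * u q x := rfl
  rw [this]
  exact integrable_finset_sum _ (fun q _ => mulInt hL2 (q + τ) q)

lemma C_sq (hmeas : ∀ p, Measurable (u p))
    (hindep : iIndepFun u μ)
    (hL2 : ∀ p, MemLp (u p) 2 μ)
    (hmean : ∀ p, ∫ x, u p x ∂μ = 0)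
    (hvar : ∀ p, ∫ x, (u p x) ^ 2 ∂μ = σ2)
    (N M : ℕ) {τ : ℤ × ℤ} (hτ : τ ≠ 0) :
    Integrable (fun x => C N M (fun p => u p x) τ ^ 2) μ ∧
      ∫ x, C N M (fun p => u p x) τ ^ 2 ∂μ = (Gf N M τ).card * (σ2 * σ2) := by
  classical
  have hfun : (fun x => C N M (fun p => u p x) τ ^ 2)
      = fun x => ∑ q ∈ Gf N M τ, ∑ q' ∈ Gf N M τ,
          (u (q + τ) x * u q x) * (u (q' + τ) x * u q' x) := by
    funext x
    rw [C, sq, Finset.sum_mul_sum]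
  have hterm := term_est hmeas hindep hL2 hmean hvar hτ
  constructor
  · rw [hfun]
    exact integrable_finset_sum _ (fun q _ =>
      integrable_finset_sum _ (fun q' _ => (hterm q q').1))
  · rw [hfun, integral_finset_sum _ (fun q _ =>
      integrable_finset_sum _ (fun q' _ => (hterm q q').1))]
    have : ∀ q ∈ Gf N M τ,
        ∫ x, ∑ q' ∈ Gf N M τ, (u (q + τ) x * u q x) * (u (q' + τ) x * u q' x) ∂μ
          = σ2 * σ2 := by
      intro q hq
      rw [integral_finset_sum _ (fun q' _ => (hterm q q').1)]
      have : ∀ q' ∈ Gf N M τ,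
          ∫ x, (u (q + τ) x * u q x) * (u (q' + τ) x * u q' x) ∂μ
            = if q = q' then σ2 * σ2 else 0 := fun q' _ => (hterm q q').2
      rw [Finset.sum_congr rfl this, Finset.sum_ite_eq (Gf N M τ) q (fun _ => σ2 * σ2),
        if_pos hq]
    rw [Finset.sum_congr rfl this, Finset.sum_const, nsmul_eq_mul]

lemma absC_bound (hmeas : ∀ p, Measurable (u p))
    (hindep : iIndepFun u μ)
    (hL2 : ∀ p, MemLp (u p) 2 μ)
    (hmean : ∀ p, ∫ x, u p x ∂μ = 0)
    (hvar : ∀ p, ∫ x, (u p x) ^ 2 ∂μ = σ2)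
    (hσ : 0 ≤ σ2)
    (N M : ℕ) {τ : ℤ × ℤ} (hτ : τ ≠ 0) :
    ∫ x, |C N M (fun p => u p x) τ| ∂μ ≤ Real.sqrt ((N : ℝ) * M) * σ2 := by
  obtain ⟨hint, hval⟩ := C_sq hmeas hindep hL2 hmean hvar N M hτ
  calc ∫ x, |C N M (fun p => u p x) τ| ∂μ
      ≤ Real.sqrt (∫ x, C N M (fun p => u p x) τ ^ 2 ∂μ) :=
        int_abs_le_sqrt (C_integrable hL2 N M τ) hint
    _ = Real.sqrt ((Gf N M τ).card * (σ2 * σ2)) := by rw [hval]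
    _ ≤ Real.sqrt (((N : ℝ) * M) * (σ2 * σ2)) := by
        apply Real.sqrt_le_sqrt
        apply mul_le_mul_of_nonneg_right _ (mul_nonneg hσ hσ)
        have h1 : (Gf N M τ).card ≤ N * M := by
          rw [← card_G N M]
          exact Finset.card_filter_le _ _
        calc ((Gf N M τ).card : ℝ) ≤ ((N * M : ℕ) : ℝ) := by exact_mod_cast h1
          _ = (N : ℝ) * M := by push_cast; ring
    _ = Real.sqrt ((N : ℝ) * M) * σ2 := by
        rw [Real.sqrt_mul (by positivity), Real.sqrt_mul_self hσ]

lemma absC_zero (hL2 : ∀ p, MemLp (u p) 2 μ)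
    (hvar : ∀ p, ∫ x, (u p x) ^ 2 ∂μ = σ2)
    (N M : ℕ) :
    ∫ x, |C N M (fun p => u p x) 0| ∂μ = ((N : ℝ) * M) * σ2 := by
  have hC0 : ∀ x, C N M (fun p => u p x) 0 = ∑ q ∈ G N M, u q x * u q x := by
    intro x
    rw [C, Gf_zero]
    exact Finset.sum_congr rfl (fun q _ => by rw [add_zero])
  have h1 : ∫ x, |C N M (fun p => u p x) 0| ∂μ
      = ∫ x, ∑ q ∈ G N M, u q x * u q x ∂μ := by
    refine integral_congr_ae (Filter.Eventually.of_forall (fun x => ?_))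
    simp only [hC0]
    exact abs_of_nonneg (Finset.sum_nonneg (fun q _ => mul_self_nonneg _))
  rw [h1, integral_finset_sum _ (fun q _ => mulInt hL2 q q)]
  rw [Finset.sum_congr rfl (fun q _ => int_mul_self hvar q), Finset.sum_const, card_G,
    nsmul_eq_mul]
  push_cast
  ring

end
end Stmt9Aux

open Stmt9Aux in
/-- For an i.i.d. real zero-mean field with finite variance, the expected squared
supremum of the normalized 2-D Fourier sum is `O((NM)^{-1/2})`. -/
theorem stmt9 {Ω : Type*} [MeasurableSpace Ω] (μ : Measure Ω) [IsProbabilityMeasure μ]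
    (u : ℤ × ℤ → Ω → ℝ) (σ2 : ℝ)
    (hmeas : ∀ p, Measurable (u p))
    (hindep : iIndepFun u μ)
    (hident : ∀ p q, Measure.map (u p) μ = Measure.map (u q) μ)
    (hL2 : ∀ p, MemLp (u p) 2 μ)
    (hmean : ∀ p, ∫ x, u p x ∂μ = 0)
    (hvar : ∀ p, ∫ x, (u p x) ^ 2 ∂μ = σ2) :
    ∃ K : ℝ, ∀ N M : ℕ, 0 < N → 0 < M →
      (∫ x,
          (⨆ w : ℝ × ℝ,
            ‖(1 / ((N : ℂ) * (M : ℂ))) *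
                ∑ n ∈ Finset.range N, ∑ m ∈ Finset.range M,
                  (u ((n : ℤ), (m : ℤ)) x : ℂ) *
                    Complex.exp (Complex.I * (w.1 * n + w.2 * m))‖ ^ 2) ∂μ) ≤
        K / Real.sqrt ((N : ℝ) * M) := by
  classical
  have hσ : 0 ≤ σ2 := by
    rw [← hvar (0, 0)]
    exact integral_nonneg (fun x => sq_nonneg _)
  refine ⟨5 * σ2, fun N M hN hM => ?_⟩
  set R : ℝ := (N : ℝ) * M with hR
  have hR1 : (1 : ℝ) ≤ R := by
    have : (1 : ℝ) ≤ (N : ℝ) := by exact_mod_cast hN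
    have : (1 : ℝ) ≤ (M : ℝ) := by exact_mod_cast hM
    nlinarith [show (1:ℝ) ≤ (N:ℝ) from by exact_mod_cast hN]
  have hR0 : (0 : ℝ) < R := lt_of_lt_of_le one_pos hR1
  -- the dominating function
  set g : Ω → ℝ := fun x => (1 / R) ^ 2 * ∑ τ ∈ T N M, |C N M (fun p => u p x) τ| with hg
  have hnorm : ‖(1 / ((N : ℂ) * (M : ℂ)))‖ = 1 / R := by
    rw [norm_div, norm_one, norm_mul, Complex.norm_natCast, Complex.norm_natCast]
  have hpt : ∀ x (w : ℝ × ℝ),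
      ‖(1 / ((N : ℂ) * (M : ℂ))) *
          ∑ n ∈ Finset.range N, ∑ m ∈ Finset.range M,
            (u ((n : ℤ), (m : ℤ)) x : ℂ) *
              Complex.exp (Complex.I * (w.1 * n + w.2 * m))‖ ^ 2 ≤ g x := by
    intro x w
    rw [norm_mul, mul_pow, hnorm]
    exact mul_le_mul_of_nonneg_left (pointwise N M (fun p => u p x) w) (sq_nonneg _)
  have hfg : ∀ x,
      (⨆ w : ℝ × ℝ,
        ‖(1 / ((N : ℂ) * (M : ℂ))) *
            ∑ n ∈ Finset.range N, ∑ m ∈ Finset.range M,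
              (u ((n : ℤ), (m : ℤ)) x : ℂ) *
                Complex.exp (Complex.I * (w.1 * n + w.2 * m))‖ ^ 2) ≤ g x := by
    intro x
    exact ciSup_le (fun w => hpt x w)
  have hf0 : ∀ x, 0 ≤
      (⨆ w : ℝ × ℝ,
        ‖(1 / ((N : ℂ) * (M : ℂ))) *
            ∑ n ∈ Finset.range N, ∑ m ∈ Finset.range M,
              (u ((n : ℤ), (m : ℤ)) x : ℂ) *
                Complex.exp (Complex.I * (w.1 * n + w.2 * m))‖ ^ 2) := by
    intro x
    have hbdd : BddAbove (Set.range (fun w : ℝ × ℝ =>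
        ‖(1 / ((N : ℂ) * (M : ℂ))) *
            ∑ n ∈ Finset.range N, ∑ m ∈ Finset.range M,
              (u ((n : ℤ), (m : ℤ)) x : ℂ) *
                Complex.exp (Complex.I * (w.1 * n + w.2 * m))‖ ^ 2)) := by
      refine ⟨g x, ?_⟩
      rintro y ⟨w, rfl⟩
      exact hpt x w
    exact le_trans (sq_nonneg _) (le_ciSup hbdd ((0, 0) : ℝ × ℝ))
  have hgint : Integrable g μ :=
    (integrable_finset_sum _ (fun τ _ => (C_integrable hL2 N M τ).abs)).const_mul _
  have key : (∫ x,
      (⨆ w : ℝ × ℝ,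
        ‖(1 / ((N : ℂ) * (M : ℂ))) *
            ∑ n ∈ Finset.range N, ∑ m ∈ Finset.range M,
              (u ((n : ℤ), (m : ℤ)) x : ℂ) *
                Complex.exp (Complex.I * (w.1 * n + w.2 * m))‖ ^ 2) ∂μ) ≤ ∫ x, g x ∂μ := by
    by_cases hfi : Integrable (fun x =>
      (⨆ w : ℝ × ℝ,
        ‖(1 / ((N : ℂ) * (M : ℂ))) *
            ∑ n ∈ Finset.range N, ∑ m ∈ Finset.range M,
              (u ((n : ℤ), (m : ℤ)) x : ℂ) *
                Complex.exp (Complex.I * (w.1 * n + w.2 * m))‖ ^ 2)) μ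
    · exact integral_mono hfi hgint (fun x => hfg x)
    · rw [integral_undef hfi]
      exact integral_nonneg (fun x => le_trans (hf0 x) (hfg x))
  refine key.trans ?_
  -- compute and bound the integral of g
  have hgeq : ∫ x, g x ∂μ
      = (1 / R) ^ 2 * ∑ τ ∈ T N M, ∫ x, |C N M (fun p => u p x) τ| ∂μ := by
    rw [hg]
    rw [MeasureTheory.integral_const_mul]
    congr 1
    exact integral_finset_sum _ (fun τ _ => (C_integrable hL2 N M τ).abs)
  have h0T : (0 : ℤ × ℤ) ∈ T N M := by
    simp only [T, Finset.mem_product, Finset.mem_Ico, Prod.fst_zero, Prod.snd_zero]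
    omega
  have hsum : ∑ τ ∈ T N M, ∫ x, |C N M (fun p => u p x) τ| ∂μ
      ≤ R * σ2 + (4 * R) * (Real.sqrt R * σ2) := by
    rw [← Finset.add_sum_erase _ _ h0T]
    have h1 : ∫ x, |C N M (fun p => u p x) 0| ∂μ = R * σ2 := absC_zero hL2 hvar N M
    have h2 : ∑ τ ∈ (T N M).erase 0, ∫ x, |C N M (fun p => u p x) τ| ∂μ
        ≤ ((T N M).erase 0).card • (Real.sqrt R * σ2) := by
      refine Finset.sum_le_card_nsmul _ _ _ (fun τ hτ => ?_)
      exact absC_bound hmeas hindep hL2 hmean hvar hσ N M (Finset.ne_of_mem_erase hτ)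
    have h3 : (((T N M).erase 0).card : ℝ) ≤ 4 * R := by
      calc (((T N M).erase 0).card : ℝ) ≤ ((T N M).card : ℝ) := by
            exact_mod_cast Finset.card_le_card (Finset.erase_subset _ _)
        _ ≤ 4 * N * M := card_T_le N M
        _ = 4 * R := by rw [hR]; ring
    rw [h1]
    have h4 : (((T N M).erase 0).card : ℝ) * (Real.sqrt R * σ2) ≤ (4 * R) * (Real.sqrt R * σ2) :=
      mul_le_mul_of_nonneg_right h3 (mul_nonneg (Real.sqrt_nonneg _) hσ)
    have h5 := h2.trans (le_of_eq (nsmul_eq_mul _ _)) |>.trans h4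
    linarith
  rw [hgeq]
  have hfinal : (1 / R) ^ 2 * (R * σ2 + (4 * R) * (Real.sqrt R * σ2))
      ≤ 5 * σ2 / Real.sqrt R := by
    set s : ℝ := Real.sqrt R with hs
    have hs0 : (0 : ℝ) < s := Real.sqrt_pos.mpr hR0
    have hss : s * s = R := Real.mul_self_sqrt hR0.le
    have h1s : (1 : ℝ) ≤ s := by
      rw [hs, show (1:ℝ) = Real.sqrt 1 by simp]
      exact Real.sqrt_le_sqrt hR1
    have hsR : s ≤ R := by nlinarith
    have heq : (1 / R) ^ 2 * (R * σ2 + (4 * R) * (s * σ2)) = σ2 / R + 4 * σ2 / s := by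
      rw [← hss]
      field_simp
    rw [heq]
    have hdiv : σ2 / R ≤ σ2 / s := by
      apply div_le_div_of_nonneg_left hσ hs0 hsR
    have : σ2 / s + 4 * σ2 / s = 5 * σ2 / s := by ring
    linarith
  calc (1 / R) ^ 2 * ∑ τ ∈ T N M, ∫ x, |C N M (fun p => u p x) τ| ∂μ
      ≤ (1 / R) ^ 2 * (R * σ2 + (4 * R) * (Real.sqrt R * σ2)) :=
        mul_le_mul_of_nonneg_left hsum (sq_nonneg _)
    _ ≤ 5 * σ2 / Real.sqrt R := hfinal
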